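/- arXiv:2501.17103 — 3 statements merged into one kernel-verified Lean document; each statement's English description precedes it below -/
import Mathlib

section
/- Let M ≥ 1, λ ∈ (0,1), h > 0 with M h ≤ 1, and A₁, A ≥ 0. Let N be the M×M lower shift matrix and B = (1-λ)I + λN. Let (f^n)_{n≥0} ⊂ ℝ^M satisfy |f^n_1| ≤ A₁ h and |f^n_j| ≤ A h² for 2 ≤ j ≤ M and all n, and let (e^n) satisfy e^0 = 0 and e^{n+1} = B e^n + f^n. Then for every n ≥ 0 and every 1 ≤ p ≤ M, |e^n_p| ≤ (A₁ + A) h / λ; in particular ‖e^n‖_∞ ≤ (A₁+A) h / λ. -/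
/-- Main estimate of Appendix C: for the upwind iteration `eⁿ⁺¹ = B eⁿ + fⁿ`
with `B = (1-λ) I + λ N` (`N` the lower shift matrix), `e⁰ = 0`, and local
errors of first order at the first node (`|fⁿ₁| ≤ A₁ h`) and second order
elsewhere (`|fⁿ_j| ≤ A h²`), the global error satisfies
`|eⁿ_p| ≤ (A₁ + A) h / λ` for all `n, p`; in particular
`‖eⁿ‖_∞ ≤ (A₁ + A) h / λ`. -/
theorem stmt8 (M : ℕ) (hM : 1 ≤ M) (l h A1 A : ℝ)
    (hl : l ∈ Set.Ioo (0 : ℝ) 1) (hh : 0 < h) (hMh : (M : ℝ) * h ≤ 1)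
    (hA1 : 0 ≤ A1) (hA : 0 ≤ A)
    (N : Matrix (Fin M) (Fin M) ℝ)
    (hN : ∀ p q : Fin M, N p q = if (p : ℕ) = (q : ℕ) + 1 then 1 else 0)
    (B : Matrix (Fin M) (Fin M) ℝ)
    (hB : B = (1 - l) • (1 : Matrix (Fin M) (Fin M) ℝ) + l • N)
    (f : ℕ → Fin M → ℝ)
    (hf1 : ∀ (n : ℕ) (j : Fin M), (j : ℕ) = 0 → |f n j| ≤ A1 * h)
    (hf2 : ∀ (n : ℕ) (j : Fin M), 1 ≤ (j : ℕ) → |f n j| ≤ A * h ^ 2)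
    (e : ℕ → Fin M → ℝ) (he0 : e 0 = 0)
    (he : ∀ n : ℕ, e (n + 1) = B.mulVec (e n) + f n) :
    (∀ (n : ℕ) (p : Fin M), |e n p| ≤ (A1 + A) * h / l) ∧
      (∀ n : ℕ, ‖e n‖ ≤ (A1 + A) * h / l) := by
  obtain ⟨hl0, hl1⟩ := hl
  -- the sharper componentwise invariant
  have key : ∀ (n : ℕ) (p : Fin M),
      |e n p| ≤ (A1 * h + (p : ℕ) * (A * h ^ 2)) / l := by
    intro n
    induction n with
    | zero =>
      intro p
      rw [he0]
      simp only [Pi.zero_apply, abs_zero]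
      positivity
    | succ n ih =>
      intro p
      rw [he n]
      -- the matrix-vector product splits into diagonal and shift parts
      have hBv : B.mulVec (e n) p
          = (1 - l) * e n p + l * ∑ q : Fin M, N p q * e n q := by
        rw [hB]
        simp only [Matrix.mulVec, dotProduct, Matrix.add_apply,
          Matrix.smul_apply, smul_eq_mul, add_mul, Finset.sum_add_distrib]
        congr 1
        · simp [Matrix.one_apply, mul_ite, ite_mul, mul_one, mul_zero, zero_mul]
        · rw [Finset.mul_sum]
          exact Finset.sum_congr rfl fun q _ => by ring
      by_cases hp : (p : ℕ) = 0
      · -- first node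
        have hshift : ∑ q : Fin M, N p q * e n q = 0 := by
          apply Finset.sum_eq_zero
          intro q _
          rw [hN, if_neg (by omega), zero_mul]
        have h1 : |e (n + 1) p| ≤ (1 - l) * |e n p| + |f n p| := by
          rw [he n]
          simp only [Pi.add_apply, hBv, hshift, mul_zero, add_zero]
          calc |(1 - l) * e n p + f n p| ≤ |(1 - l) * e n p| + |f n p| :=
                abs_add_le _ _
            _ = (1 - l) * |e n p| + |f n p| := by
                rw [abs_mul, abs_of_nonneg (by linarith)]
        rw [← he n]
        have hip := ih p
        have hfp := hf1 n p hp
        rw [hp] at hip ⊢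
        push_cast at hip ⊢
        rw [zero_mul, add_zero] at hip ⊢
        calc |e (n + 1) p| ≤ (1 - l) * |e n p| + |f n p| := h1
          _ ≤ (1 - l) * (A1 * h / l) + A1 * h := by
              have : 0 ≤ 1 - l := by linarith
              nlinarith [abs_nonneg (e n p)]
          _ = A1 * h / l := by field_simp; ring
      · -- interior nodes
        set q0 : Fin M := ⟨(p : ℕ) - 1, by omega⟩ with hq0
        have hshift : ∑ q : Fin M, N p q * e n q = e n q0 := by
          rw [Finset.sum_eq_single q0]
          · rw [hN, if_pos (by simp [hq0]; omega), one_mul]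
          · intro q _ hq
            rw [hN, if_neg, zero_mul]
            intro hc
            exact hq (Fin.ext (by simp [hq0]; omega))
          · intro hc; exact absurd (Finset.mem_univ q0) hc
        have h1 : |e (n + 1) p| ≤ (1 - l) * |e n p| + l * |e n q0| + |f n p| := by
          rw [he n]
          simp only [Pi.add_apply, hBv, hshift]
          calc |(1 - l) * e n p + l * e n q0 + f n p|
              ≤ |(1 - l) * e n p + l * e n q0| + |f n p| := abs_add_le _ _
            _ ≤ |(1 - l) * e n p| + |l * e n q0| + |f n p| := by
                gcongr; exact abs_add_le _ _
            _ = (1 - l) * |e n p| + l * |e n q0| + |f n p| := by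
                rw [abs_mul, abs_mul, abs_of_nonneg (by linarith : (0:ℝ) ≤ 1 - l),
                  abs_of_nonneg hl0.le]
        rw [← he n]
        have hip := ih p
        have hiq := ih q0
        have hfp := hf2 n p (by omega)
        have hq0v : ((q0 : ℕ) : ℝ) = (p : ℕ) - 1 := by
          simp [hq0]
          push_cast [Nat.cast_sub (by omega : 1 ≤ (p : ℕ))]
          ring
        rw [hq0v] at hiq
        have hle : (1 - l) * ((A1 * h + (p : ℕ) * (A * h ^ 2)) / l)
            + l * ((A1 * h + ((p : ℕ) - 1) * (A * h ^ 2)) / l) + A * h ^ 2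
            = (A1 * h + (p : ℕ) * (A * h ^ 2)) / l := by
          field_simp
          ring
        calc |e (n + 1) p|
            ≤ (1 - l) * |e n p| + l * |e n q0| + |f n p| := h1
          _ ≤ (1 - l) * ((A1 * h + (p : ℕ) * (A * h ^ 2)) / l)
              + l * ((A1 * h + ((p : ℕ) - 1) * (A * h ^ 2)) / l) + A * h ^ 2 := by
              gcongr <;> linarith
          _ = (A1 * h + (p : ℕ) * (A * h ^ 2)) / l := hle
  -- deduce the stated bounds
  have main : ∀ (n : ℕ) (p : Fin M), |e n p| ≤ (A1 + A) * h / l := by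
    intro n p
    refine (key n p).trans ?_
    have hpM : ((p : ℕ) : ℝ) * h ≤ 1 := by
      have h1 : ((p : ℕ) : ℝ) ≤ (M : ℝ) := by exact_mod_cast (p.isLt).le
      nlinarith
    gcongr
    nlinarith [mul_le_mul_of_nonneg_right hpM (mul_nonneg hA hh.le)]
  refine ⟨main, ?_⟩
  intro n
  have hnn : 0 ≤ (A1 + A) * h / l := by positivity
  rw [pi_norm_le_iff_of_nonneg hnn]
  intro p
  rw [Real.norm_eq_abs]
  exact main n p
end

section
/- Let M ≥ 1, λ ∈ (0,1), let N be the M×M lower shift matrix, B = (1-λ)I + λN, let (f^k)_{k≥0} ⊂ ℝ^M, and define e^n = ∑_{k=0}^{n-1} B^{n-1-k} f^k. Then for every 1 ≤ p ≤ M and n ≥ 1, e^n_p = ∑_{q=1}^{p} λ^{p-q} ∑_{k=p-q}^{n-1} C(k, p-q) (1-λ)^{k-(p-q)} f^{n-k-1}_q. -/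
/-- Closed form of the error components (Appendix C): with
`B = (1-λ) I + λ N` (`N` the lower shift matrix) and
`eⁿ = ∑_{k=0}^{n-1} B^{n-1-k} fᵏ`, for `n ≥ 1` and every index `p`,
`eⁿ_p = ∑_{q=1}^{p} λ^{p-q} ∑_{k=p-q}^{n-1} C(k, p-q) (1-λ)^{k-(p-q)} f^{n-k-1}_q`. -/
theorem stmt9 (M : ℕ) (hM : 1 ≤ M) (l : ℝ) (hl : l ∈ Set.Ioo (0 : ℝ) 1)
    (N : Matrix (Fin M) (Fin M) ℝ)
    (hN : ∀ p q : Fin M, N p q = if (p : ℕ) = (q : ℕ) + 1 then 1 else 0)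
    (B : Matrix (Fin M) (Fin M) ℝ)
    (hB : B = (1 - l) • (1 : Matrix (Fin M) (Fin M) ℝ) + l • N)
    (f e : ℕ → Fin M → ℝ)
    (he : ∀ n : ℕ, e n = ∑ k ∈ Finset.range n, (B ^ (n - 1 - k)).mulVec (f k)) :
    ∀ n : ℕ, 1 ≤ n → ∀ p : Fin M,
      e n p = ∑ q ∈ Finset.Iic p,
        l ^ ((p : ℕ) - (q : ℕ)) *
          ∑ k ∈ Finset.Ico ((p : ℕ) - (q : ℕ)) n,
            (k.choose ((p : ℕ) - (q : ℕ)) : ℝ) * (1 - l) ^ (k - ((p : ℕ) - (q : ℕ))) *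
              f (n - k - 1) q := by
  have key : ∀ (m : ℕ) (p q : Fin M), (B ^ m) p q =
      if (q : ℕ) ≤ (p : ℕ) then
        (m.choose ((p : ℕ) - (q : ℕ)) : ℝ) * (1 - l) ^ (m - ((p : ℕ) - (q : ℕ)))
          * l ^ ((p : ℕ) - (q : ℕ))
      else 0 := by
    intro m
    induction m with
    | zero =>
      intro p q
      simp only [pow_zero, Matrix.one_apply]
      rcases eq_or_ne p q with h | h
      · subst h; simp
      · rw [if_neg h]
        have hv : (p : ℕ) ≠ (q : ℕ) := fun hc => h (Fin.ext hc)
        split_ifs with h2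
        · rw [Nat.choose_eq_zero_of_lt (by omega)]; simp
        · rfl
    | succ m ih =>
      intro p q
      rw [pow_succ', Matrix.mul_apply]
      have hBpr : ∀ r : Fin M, B p r
          = (1 - l) * (if p = r then 1 else 0) + l * (if (p : ℕ) = (r : ℕ) + 1 then 1 else 0) := by
        intro r
        simp [hB, Matrix.add_apply, Matrix.one_apply, hN]
      have hsplit : ∑ r : Fin M, B p r * (B ^ m) r q
          = (1 - l) * (B ^ m) p q
            + l * ∑ r : Fin M, (if (p : ℕ) = (r : ℕ) + 1 then (B ^ m) r q else 0) := by
        calc ∑ r : Fin M, B p r * (B ^ m) r q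
            = ∑ r : Fin M, ((1 - l) * (if p = r then (B ^ m) r q else 0)
                + l * (if (p : ℕ) = (r : ℕ) + 1 then (B ^ m) r q else 0)) := by
              refine Finset.sum_congr rfl fun r _ => ?_
              rw [hBpr r]; split_ifs <;> ring
          _ = _ := by
              rw [Finset.sum_add_distrib, ← Finset.mul_sum, ← Finset.mul_sum,
                Finset.sum_ite_eq Finset.univ p fun r => (B ^ m) r q]
              simp
      rw [hsplit]
      by_cases hp0 : (p : ℕ) = 0
      · have hz : ∑ r : Fin M, (if (p : ℕ) = (r : ℕ) + 1 then (B ^ m) r q else 0) = 0 :=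
          Finset.sum_eq_zero fun r _ => by rw [if_neg (by omega)]
        rw [hz, ih]
        by_cases hq : (q : ℕ) ≤ (p : ℕ)
        · rw [if_pos hq, if_pos hq]
          have hd : (p : ℕ) - (q : ℕ) = 0 := by omega
          rw [hd]; simp [pow_succ]; ring
        · rw [if_neg hq, if_neg hq]; ring
      · have hplt : (p : ℕ) - 1 < M := by omega
        set p' : Fin M := ⟨(p : ℕ) - 1, hplt⟩ with hp'
        have hsum2 : ∑ r : Fin M, (if (p : ℕ) = (r : ℕ) + 1 then (B ^ m) r q else 0)
            = (B ^ m) p' q := by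
          refine Finset.sum_eq_single p' (fun r _ hr => ?_) (fun h => absurd (Finset.mem_univ p') h) |>.trans ?_
          · rw [if_neg]
            intro hc
            exact hr (Fin.ext (by simp [hp']; omega))
          · rw [if_pos (by simp [hp']; omega)]
        rw [hsum2, ih, ih]
        set d : ℕ := (p : ℕ) - (q : ℕ) with hd
        by_cases hq : (q : ℕ) ≤ (p : ℕ)
        · rw [if_pos hq, if_pos hq]
          by_cases hq' : (q : ℕ) ≤ (p' : ℕ)
          · rw [if_pos hq']
            have hd1 : (p' : ℕ) - (q : ℕ) = d - 1 := by simp [hp']; omega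
            have hdpos : 1 ≤ d := by simp [hp'] at hq'; omega
            rw [hd1]
            by_cases hdm : d ≤ m
            · have pascal : ((m + 1).choose d : ℝ) = m.choose d + m.choose (d - 1) := by
                have hps : (m + 1).choose d = m.choose (d - 1) + m.choose d := by
                  conv_lhs => rw [show d = (d - 1) + 1 by omega]
                  rw [Nat.choose_succ_succ, Nat.succ_eq_add_one, show d - 1 + 1 = d by omega]
                rw [hps]
                push_cast
                ring
              have h2 : m - (d - 1) = m + 1 - d := by omega
              have h1 : (1 - l) * (1 - l) ^ (m - d) = (1 - l) ^ (m + 1 - d) := by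
                rw [← pow_succ']; congr 1; omega
              have h3 : l * l ^ (d - 1) = l ^ d := by
                rw [← pow_succ']; congr 1; omega
              rw [h2, pascal, ← h1, ← h3]; ring
            · by_cases hdm1 : d = m + 1
              · rw [hdm1]
                rw [Nat.choose_eq_zero_of_lt (by omega), Nat.choose_self,
                  show m + 1 - 1 = m from rfl, Nat.choose_self,
                  show m - (m + 1) = 0 by omega, show m - m = 0 by omega,
                  show m + 1 - (m + 1) = 0 by omega]
                push_cast
                rw [pow_succ]
                ring
              · rw [Nat.choose_eq_zero_of_lt (by omega), Nat.choose_eq_zero_of_lt (by omega),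
                  Nat.choose_eq_zero_of_lt (by omega)]
                push_cast; ring
          · -- q = p, d = 0
            rw [if_neg hq']
            have hd0 : d = 0 := by simp [hp'] at hq'; omega
            rw [hd0]; simp [pow_succ]; ring
        · rw [if_neg hq, if_neg hq]
          rw [if_neg (by simp [hp']; omega)]
          ring
  intro n hn p
  have hrw : e n p = ∑ m ∈ Finset.range n, ∑ q : Fin M, (B ^ m) p q * f (n - 1 - m) q := by
    rw [he n, Finset.sum_apply, ← Finset.sum_range_reflect]
    refine Finset.sum_congr rfl fun j hj => ?_
    rw [Finset.mem_range] at hj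
    rw [show n - 1 - (n - 1 - j) = j by omega]
    simp [Matrix.mulVec, dotProduct]
  rw [hrw, Finset.sum_comm]
  have hIic : Finset.Iic p = Finset.univ.filter (fun q : Fin M => (q : ℕ) ≤ (p : ℕ)) := by
    ext r; simp only [Finset.mem_Iic, Finset.mem_filter, Finset.mem_univ, true_and, Fin.le_def]
  rw [hIic, Finset.sum_filter]
  refine Finset.sum_congr rfl fun q _ => ?_
  by_cases hq : (q : ℕ) ≤ (p : ℕ)
  · rw [if_pos hq]
    set d := (p : ℕ) - (q : ℕ) with hd
    calc ∑ m ∈ Finset.range n, (B ^ m) p q * f (n - 1 - m) q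
        = ∑ m ∈ Finset.range n,
            (m.choose d : ℝ) * (1 - l) ^ (m - d) * l ^ d * f (n - 1 - m) q := by
          refine Finset.sum_congr rfl fun m _ => ?_
          rw [key, if_pos hq]
      _ = ∑ k ∈ Finset.Ico d n,
            (k.choose d : ℝ) * (1 - l) ^ (k - d) * l ^ d * f (n - 1 - k) q := by
          refine (Finset.sum_subset (fun x hx => ?_) (fun x hx hxn => ?_)).symm
          · simp only [Finset.mem_Ico] at hx
            simp only [Finset.mem_range]
            omega
          · simp only [Finset.mem_Ico, Finset.mem_range] at hx hxn
            rw [Nat.choose_eq_zero_of_lt (by omega)]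
            simp
      _ = l ^ d * ∑ k ∈ Finset.Ico d n,
            (k.choose d : ℝ) * (1 - l) ^ (k - d) * f (n - k - 1) q := by
          rw [Finset.mul_sum]
          refine Finset.sum_congr rfl fun k hk => ?_
          rw [show n - 1 - k = n - k - 1 by omega]
          ring
  · rw [if_neg hq]
    refine Finset.sum_eq_zero fun m _ => ?_
    rw [key, if_neg hq, zero_mul]
end

section
/- Let T > 0, λ ∈ (0,1], and let u : ℝ × [0, T] → ℝ be twice continuously differentiable with all first and second partial derivatives bounded in absolute value by K, and satisfying u_t + u_x = 0. Define g(t) = u(0, t). Then there is a constant A₁ depending only on K and λ such that for all h > 0 and t with t + λh ≤ T: |u(h/2, t + λh) - (1-λ) u(h/2, t) - λ g(t)| ≤ A₁ h. -/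
open Set

/-- Boundary local truncation error of the upwind scheme for `u_t + u_x = 0`:
if `u : ℝ × [0,T] → ℝ` is twice continuously differentiable with all first and
second partial derivatives bounded by `K` and satisfies the advection
equation, and `g(t) = u(0,t)`, then there is a constant `A₁` depending only on
`K` and `λ` such that
`|u(h/2, t + λh) - (1-λ) u(h/2, t) - λ g(t)| ≤ A₁ h`
for all `h > 0` and `t` with `0 ≤ t` and `t + λh ≤ T`. -/
theorem stmt15 (T K l : ℝ) (hT : 0 < T) (hl : l ∈ Set.Ioc (0 : ℝ) 1)
    (u : ℝ × ℝ → ℝ)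
    (hu : ContDiffOn ℝ 2 u ((univ : Set ℝ) ×ˢ Icc (0 : ℝ) T))
    (hbound1 : ∀ p ∈ ((univ : Set ℝ) ×ˢ Icc (0 : ℝ) T),
      ‖iteratedFDerivWithin ℝ 1 u ((univ : Set ℝ) ×ˢ Icc (0 : ℝ) T) p‖ ≤ K)
    (hbound2 : ∀ p ∈ ((univ : Set ℝ) ×ˢ Icc (0 : ℝ) T),
      ‖iteratedFDerivWithin ℝ 2 u ((univ : Set ℝ) ×ˢ Icc (0 : ℝ) T) p‖ ≤ K)
    (hpde : ∀ p ∈ ((univ : Set ℝ) ×ˢ Icc (0 : ℝ) T),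
      fderivWithin ℝ u ((univ : Set ℝ) ×ˢ Icc (0 : ℝ) T) p ((0 : ℝ), (1 : ℝ)) +
        fderivWithin ℝ u ((univ : Set ℝ) ×ˢ Icc (0 : ℝ) T) p ((1 : ℝ), (0 : ℝ)) = 0)
    (g : ℝ → ℝ) (hg : ∀ t, g t = u (0, t)) :
    ∃ A₁ : ℝ, ∀ h t : ℝ, 0 < h → 0 ≤ t → t + l * h ≤ T →
      |u (h / 2, t + l * h) - (1 - l) * u (h / 2, t) - l * g t| ≤ A₁ * h := by
  obtain ⟨hl0, hl1⟩ := hl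
  set s : Set (ℝ × ℝ) := (univ : Set ℝ) ×ˢ Icc (0 : ℝ) T with hs
  have hconv : Convex ℝ s := convex_univ.prod (convex_Icc _ _)
  have hud : UniqueDiffOn ℝ s :=
    UniqueDiffOn.prod uniqueDiffOn_univ (uniqueDiffOn_Icc hT)
  have hdiff : DifferentiableOn ℝ u s := hu.differentiableOn two_ne_zero
  have hK0 : 0 ≤ K := by
    have := hbound1 (0, 0) (by simp [hs, hT.le])
    exact le_trans (norm_nonneg _) this
  have hfd : ∀ x ∈ s, ‖fderivWithin ℝ u s x‖ ≤ K := by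
    intro x hx
    refine ContinuousLinearMap.opNorm_le_bound _ hK0 (fun v => ?_)
    have h1 : fderivWithin ℝ u s x v
        = iteratedFDerivWithin ℝ 1 u s x (fun _ => v) := by
      rw [iteratedFDerivWithin_one_apply (hud x hx)]
    rw [h1]
    calc ‖iteratedFDerivWithin ℝ 1 u s x (fun _ => v)‖
        ≤ ‖iteratedFDerivWithin ℝ 1 u s x‖ * ∏ _i : Fin 1, ‖v‖ :=
          (iteratedFDerivWithin ℝ 1 u s x).le_opNorm _
      _ ≤ K * ‖v‖ := by
          simp only [Finset.prod_const, Finset.card_univ, Fintype.card_fin, pow_one]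
          exact mul_le_mul_of_nonneg_right (hbound1 x hx) (norm_nonneg _)
  have lip : ∀ p ∈ s, ∀ q ∈ s, ‖u q - u p‖ ≤ K * ‖q - p‖ := fun p hp q hq =>
    hconv.norm_image_sub_le_of_norm_fderivWithin_le hdiff hfd hp hq
  refine ⟨2 * K, fun h t hh ht hle => ?_⟩
  have hlh : 0 ≤ l * h := le_of_lt (mul_pos hl0 hh)
  have htT : t ≤ T := le_trans (le_add_of_nonneg_right hlh) hle
  have hp1 : ((h / 2, t + l * h) : ℝ × ℝ) ∈ s := by
    simp [hs, le_trans ht (le_add_of_nonneg_right hlh), hle]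
  have hp2 : ((h / 2, t) : ℝ × ℝ) ∈ s := by simp [hs, ht, htT]
  have hq : ((0, t) : ℝ × ℝ) ∈ s := by simp [hs, ht, htT]
  have e1 := lip _ hp2 _ hp1
  have e2 := lip _ hq _ hp2
  have n1 : ‖((h / 2, t + l * h) : ℝ × ℝ) - (h / 2, t)‖ = l * h := by
    simp [Prod.norm_def, abs_of_nonneg hlh, abs_of_pos hl0, abs_of_pos hh]
    exact hlh
  have n2 : ‖((h / 2, t) : ℝ × ℝ) - (0, t)‖ = h / 2 := by
    simp [Prod.norm_def, abs_of_pos hh]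
    exact (half_pos hh).le
  rw [n1] at e1
  rw [n2] at e2
  rw [hg]
  have key : u (h / 2, t + l * h) - (1 - l) * u (h / 2, t) - l * u (0, t)
      = (u (h / 2, t + l * h) - u (h / 2, t)) + l * (u (h / 2, t) - u (0, t)) := by
    ring
  rw [key]
  calc |(u (h / 2, t + l * h) - u (h / 2, t)) + l * (u (h / 2, t) - u (0, t))|
      ≤ |u (h / 2, t + l * h) - u (h / 2, t)| + |l * (u (h / 2, t) - u (0, t))| :=
        abs_add_le _ _
    _ ≤ K * (l * h) + l * (K * (h / 2)) := by
        rw [abs_mul, abs_of_pos hl0]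
        exact add_le_add e1 (mul_le_mul_of_nonneg_left e2 hl0.le)
    _ ≤ 2 * K * h := by nlinarith [mul_nonneg hK0 hh.le, mul_nonneg (mul_nonneg hK0 hh.le) (sub_nonneg.2 hl1)]
end
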